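/- Let σ be a type and A the free associative unital ℤ-algebra on σ, whose elements are written uniquely as finite ℤ-linear combinations of words (products ι(s₁)⋯ι(s_m) of generators, with the empty word giving 1); write coeff_w(f) ∈ ℤ for the coefficient of the word w in f. Let q ≥ 0 be an integer and d a function assigning an integer to each word over σ such that d(w) divides d(v) whenever v is a subsequence (not necessarily contiguous sublist) of w. Then the set D = { f ∈ A | for every word w of length < q, d(w) divides coeff_w(f) } is a two-sided ideal of A. -/

import Mathlib

/-- The coefficient of the word `w` in an element `f` of the free associative unital
`ℤ`-algebra on `σ`, via the canonical identification with the monoid algebra of the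
free monoid on `σ`. -/
noncomputable def FreeAlgebra.wordCoeff {σ : Type*} (f : FreeAlgebra ℤ σ) (w : List σ) : ℤ :=
  (FreeAlgebra.equivMonoidAlgebraFreeMonoid f).coeff (FreeMonoid.ofList w)

lemma wordCoeff_mul_dvd {σ : Type*} (q : ℕ) (d : List σ → ℤ)
    (hd : ∀ v w : List σ, v.Sublist w → d w ∣ d v)
    (x y : FreeAlgebra ℤ σ)
    (h : (∀ w : List σ, w.length < q → d w ∣ FreeAlgebra.wordCoeff x w) ∨
         (∀ w : List σ, w.length < q → d w ∣ FreeAlgebra.wordCoeff y w))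
    (w : List σ) (hw : w.length < q) :
    d w ∣ FreeAlgebra.wordCoeff (x * y) w := by
  classical
  have key : ∀ f : FreeAlgebra ℤ σ, ∀ a : FreeMonoid σ,
      (FreeAlgebra.equivMonoidAlgebraFreeMonoid f).coeff a = FreeAlgebra.wordCoeff f a.toList := by
    intro f a
    simp [FreeAlgebra.wordCoeff, FreeMonoid.ofList_toList]
  rw [FreeAlgebra.wordCoeff, map_mul, MonoidAlgebra.coeff_mul]
  unfold Finsupp.sum
  apply Finset.dvd_sum
  intro a _
  apply Finset.dvd_sum
  intro a' _
  by_cases hc : a * a' = FreeMonoid.ofList w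
  · simp only [if_pos hc]
    have hsplit : a.toList ++ a'.toList = w := by
      have := congrArg FreeMonoid.toList hc
      simpa using this
    rcases h with h | h
    · have hsub : a.toList.Sublist w := hsplit ▸ List.sublist_append_left _ _
      have hlen : a.toList.length < q := lt_of_le_of_lt hsub.length_le hw
      exact Dvd.dvd.mul_right ((hd _ _ hsub).trans
        (by rw [key x a]; exact h a.toList hlen)) _
    · have hsub : a'.toList.Sublist w := hsplit ▸ List.sublist_append_right _ _
      have hlen : a'.toList.length < q := lt_of_le_of_lt hsub.length_le hw
      exact Dvd.dvd.mul_left ((hd _ _ hsub).trans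
        (by rw [key y a']; exact h a'.toList hlen)) _
  · simp only [if_neg hc]
    exact dvd_zero _

theorem stmt9 {σ : Type*} (q : ℕ) (d : List σ → ℤ)
    (hd : ∀ v w : List σ, v.Sublist w → d w ∣ d v) :
    ∃ D : TwoSidedIdeal (FreeAlgebra ℤ σ),
      ∀ f : FreeAlgebra ℤ σ,
        f ∈ D ↔ ∀ w : List σ, w.length < q → d w ∣ FreeAlgebra.wordCoeff f w := by
  classical
  refine ⟨TwoSidedIdeal.mk'
      {f | ∀ w : List σ, w.length < q → d w ∣ FreeAlgebra.wordCoeff f w}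
      (fun w hw => by simp [FreeAlgebra.wordCoeff])
      (fun hx hy w hw => by
        rw [FreeAlgebra.wordCoeff, map_add, MonoidAlgebra.coeff_add, Finsupp.add_apply]
        exact dvd_add (hx w hw) (hy w hw))
      (fun hx w hw => by
        rw [FreeAlgebra.wordCoeff, map_neg, MonoidAlgebra.coeff_neg, Finsupp.neg_apply]
        exact (hx w hw).neg_right)
      (fun {x y} hy => wordCoeff_mul_dvd q d hd x y (Or.inr hy))
      (fun {x y} hx => wordCoeff_mul_dvd q d hd x y (Or.inl hx)), ?_⟩
  intro f
  rw [TwoSidedIdeal.mem_mk']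
  rfl
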